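/- Let p be a prime and m a natural number. Let r ∈ ℕ and let s be an integer with 0 < s < p^m. Then there exists a unit u of the localization ℤ[q]_{(p,q−1)} such that (p^m r + s)_q = u · (s)_q holds in ℤ[q]_{(p,q−1)}. -/
import Mathlib


noncomputable section

open Polynomial

/-- `ℤ[q]`, the polynomial ring in one variable `q` over `ℤ`. -/
abbrev Zq : Type := Polynomial ℤ

/-- `ℚ(q)`, realized as the fraction field of `ℤ[q]`. -/
abbrev Qq : Type := FractionRing Zq

/-- The canonical embedding `ℤ[q] → ℚ(q)`. -/
def ι : Zq →+* Qq := algebraMap Zq Qq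

/-- The image of the variable `q` in `ℚ(q)`. -/
def qQ : Qq := ι X

/-- The `q^a`-integer `(n)_{q^a} = 1 + q^a + ⋯ + q^{a(n-1)}` in `ℤ[q]`. -/
def qInt (a n : ℕ) : Zq := ∑ j ∈ Finset.range n, X ^ (a * j)

/-- The `q^a`-factorial `(n)_{q^a}! = ∏_{i=1}^{n} (i)_{q^a}` in `ℤ[q]`. -/
def qFact (a n : ℕ) : Zq := ∏ i ∈ Finset.range n, qInt a (i + 1)

/-- The prime ideal `(p, q - 1)` of `ℤ[q]`. -/
def pqIdeal (p : ℕ) : Ideal Zq := Ideal.span {C (p : ℤ), X - 1}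

/-- Membership in the localization `ℤ[q]_{(p,q-1)}`, viewed inside `ℚ(q)`:
`x = a / b` with `b ∉ (p, q-1)`. -/
def InLoc (p : ℕ) (x : Qq) : Prop :=
  ∃ a b : Zq, b ∉ pqIdeal p ∧ x * ι b = ι a

/-- Being a unit of the localization `ℤ[q]_{(p,q-1)}`, viewed inside `ℚ(q)`:
`x = a / b` with `a, b ∉ (p, q-1)`. -/
def IsLocUnit (p : ℕ) (x : Qq) : Prop :=
  ∃ a b : Zq, a ∉ pqIdeal p ∧ b ∉ pqIdeal p ∧ x * ι b = ι a

/-- The Gaussian `q`-binomial coefficient `(k choose k')_q` as an element of `ℚ(q)`. -/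
def qBinomF (k k' : ℕ) : Qq :=
  ι (qFact 1 k) / (ι (qFact 1 k') * ι (qFact 1 (k - k')))

/-- The level-`m` coefficient `{k choose k'}_{(m),q}` as an element of `ℚ(q)`. -/
def braceC (p m k k' : ℕ) : Qq :=
  ι (qFact (p ^ m) (k / p ^ m)) /
    (ι (qFact (p ^ m) (k' / p ^ m)) * ι (qFact (p ^ m) ((k - k') / p ^ m)))

/-- The level-`m` coefficient `⟨k choose k'⟩_{(m),q}` as an element of `ℚ(q)`. -/
def angleC (p m k k' : ℕ) : Qq := qBinomF k k' * (braceC p m k k')⁻¹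


lemma eval_qInt (a n : ℕ) : (qInt a n).eval 1 = n := by
  simp [qInt, eval_finset_sum]

lemma dvd_of_mem_pqIdeal (p : ℕ) {x : Zq} (hx : x ∈ pqIdeal p) : (p : ℤ) ∣ x.eval 1 := by
  rw [pqIdeal, Ideal.mem_span_pair] at hx
  obtain ⟨u, v, h⟩ := hx
  rw [← h]
  simp

lemma not_mem_pqIdeal_of_qInt (p a n : ℕ) (hn : ¬ p ∣ n) : qInt a n ∉ pqIdeal p := by
  intro h
  have := dvd_of_mem_pqIdeal p h
  rw [eval_qInt] at this
  exact hn (Int.ofNat_dvd.mp this)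

lemma qInt_mul (a t : ℕ) : qInt 1 (a * t) = qInt a t * qInt 1 a := by
  induction t with
  | zero => simp [qInt]
  | succ t ih =>
    have h1 : a * (t + 1) = a * t + a := by ring
    rw [h1]
    unfold qInt at *
    rw [Finset.sum_range_add, Finset.sum_range_succ, add_mul, ← ih]
    congr 1
    rw [Finset.mul_sum]
    apply Finset.sum_congr rfl
    intro k _
    rw [← pow_add]
    ring_nf

lemma qInt_ne_zero (a n : ℕ) (hn : 0 < n) : qInt a n ≠ 0 := by
  intro h
  have := eval_qInt a n
  rw [h] at this
  simp at this
  omega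

theorem stmt3 (p : ℕ) (hp : p.Prime) (m r s : ℕ) (hs : 0 < s) (hs' : s < p ^ m) :
    ∃ u : Qq, IsLocUnit p u ∧ ι (qInt 1 (p ^ m * r + s)) = u * ι (qInt 1 s) := by
  set v := s.factorization p with hv
  set t := s / p ^ v with htdef
  have hts : p ^ v * t = s := Nat.ordProj_mul_ordCompl_eq_self s p
  have ht : ¬ p ∣ t := Nat.not_dvd_ordCompl hp hs.ne'
  have hvm : v < m := by
    have h1 : p ^ v ≤ s := Nat.ordProj_le p hs.ne'
    have h2 : p ^ v < p ^ m := lt_of_le_of_lt h1 hs'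
    exact (Nat.pow_lt_pow_iff_right hp.one_lt).mp h2
  set T := p ^ (m - v) * r + t with hTdef
  have hT : ¬ p ∣ T := by
    intro h
    rw [hTdef] at h
    have hdvd : p ∣ p ^ (m - v) * r :=
      dvd_mul_of_dvd_left (dvd_pow_self p (by omega)) r
    exact ht ((Nat.dvd_add_right hdvd).mp h)
  have hvm' : v + (m - v) = m := by omega
  have hN : p ^ m * r + s = p ^ v * T := by
    rw [hTdef, Nat.mul_add, ← Nat.mul_assoc, ← pow_add, hvm', hts]
  have ht0 : 0 < t := by
    rcases Nat.eq_zero_or_pos t with h | h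
    · rw [h, Nat.mul_zero] at hts; omega
    · exact h
  have hB0 : ι (qInt (p ^ v) t) ≠ 0 := by
    intro h
    exact qInt_ne_zero (p ^ v) t ht0 ((map_eq_zero_iff ι (IsFractionRing.injective Zq Qq)).mp h)
  refine ⟨ι (qInt (p ^ v) T) / ι (qInt (p ^ v) t), ⟨qInt (p ^ v) T, qInt (p ^ v) t,
    not_mem_pqIdeal_of_qInt p _ _ hT, not_mem_pqIdeal_of_qInt p _ _ ht, ?_⟩, ?_⟩
  · rw [div_mul_cancel₀ _ hB0]
  · rw [hN, ← hts, qInt_mul, qInt_mul, map_mul, map_mul]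
    have key : (ι (qInt (p ^ v) T) / ι (qInt (p ^ v) t)) *
        (ι (qInt (p ^ v) t) * ι (qInt 1 (p ^ v))) =
        (ι (qInt (p ^ v) T) / ι (qInt (p ^ v) t) * ι (qInt (p ^ v) t)) * ι (qInt 1 (p ^ v)) := by
      ring
    rw [key, div_mul_cancel₀ _ hB0]
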